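/- Let D be a finite digraph with vertex set {v₁, …, vₙ}, and let D′ be the digraph obtained from D by adding, for each 1 ≤ i ≤ n, two new vertices wᵢ and uᵢ together with the arcs (wᵢ, uᵢ), (uᵢ, wᵢ) and (uᵢ, vᵢ). Then γ×₂(D′) = γ×₂ᵗ(D′) = 2n + γ(D). -/
import Mathlib


open Finset

variable {V : Type*}

/-- The out-degree of `v` in the digraph with arc relation `A`. -/
def outDeg [Fintype V] (A : V → V → Prop) [DecidableRel A] (v : V) : ℕ :=
  (Finset.univ.filter fun u => A v u).card

/-- The in-degree of `v` in the digraph with arc relation `A`. -/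
def inDeg [Fintype V] (A : V → V → Prop) [DecidableRel A] (v : V) : ℕ :=
  (Finset.univ.filter fun u => A u v).card

/-- The minimum in-degree `δ⁻` of the digraph. -/
noncomputable def minInDeg [Fintype V] (A : V → V → Prop) [DecidableRel A] : ℕ :=
  sInf (Set.range fun v => inDeg A v)

/-- The maximum out-degree `Δ⁺` of the digraph. -/
noncomputable def maxOutDeg [Fintype V] (A : V → V → Prop) [DecidableRel A] : ℕ :=
  sSup (Set.range fun v => outDeg A v)

/-- The converse digraph `D⁻¹`, obtained by reversing every arc. -/
def converse (A : V → V → Prop) : V → V → Prop := fun u v => A v u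

instance converseDecidable (A : V → V → Prop) [h : DecidableRel A] :
    DecidableRel (converse A) := fun u v => h v u

/-- `B` is a `k`-limited packing: `|N⁺[v] ∩ B| ≤ k` for every vertex `v`. -/
def IsLimitedPacking [DecidableEq V] (A : V → V → Prop) [DecidableRel A] (k : ℕ)
    (B : Finset V) : Prop :=
  ∀ v : V, (B.filter fun u => u = v ∨ A v u).card ≤ k

/-- The `k`-limited packing number `L_k(D)` (`k = 1` gives the packing number `ρ(D)`). -/
noncomputable def limitedPackingNumber [Fintype V] [DecidableEq V] (A : V → V → Prop) [DecidableRel A]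
    (k : ℕ) : ℕ :=
  sSup {m | ∃ B : Finset V, IsLimitedPacking A k B ∧ B.card = m}

/-- `S` is an `r`-tuple dominating set: every vertex is dominated by at least `r`
vertices of `S` (where `u` dominates `v` if `u = v` or `(u,v)` is an arc). -/
def IsTupleDominating [DecidableEq V] (A : V → V → Prop) [DecidableRel A] (r : ℕ)
    (S : Finset V) : Prop :=
  ∀ v : V, r ≤ (S.filter fun u => u = v ∨ A u v).card

/-- The `r`-tuple domination number `γ×r(D)` (`r = 1` gives the domination number `γ(D)`,
`r = 2` the double domination number `γ×₂(D)`). -/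
noncomputable def tupleDominationNumber [Fintype V] [DecidableEq V] (A : V → V → Prop) [DecidableRel A]
    (r : ℕ) : ℕ :=
  sInf {m | ∃ S : Finset V, IsTupleDominating A r S ∧ S.card = m}

/-- `S` is a total 2-dominating set: the subdigraph induced by `S` has no isolated
vertices, and every vertex outside `S` has at least two in-neighbors in `S`. -/
def IsTotal2Dominating [DecidableEq V] (A : V → V → Prop) [DecidableRel A]
    (S : Finset V) : Prop :=
  (∀ v ∈ S, ∃ u ∈ S, u ≠ v ∧ (A u v ∨ A v u)) ∧
    ∀ v : V, v ∉ S → 2 ≤ (S.filter fun u => A u v).card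

/-- The total 2-domination number `γ×₂ᵗ(D)`. -/
noncomputable def total2DominationNumber [Fintype V] [DecidableEq V] (A : V → V → Prop)
    [DecidableRel A] : ℕ :=
  sInf {m | ∃ S : Finset V, IsTotal2Dominating A S ∧ S.card = m}

/-- `B` is a total 2-limited packing: every vertex of `B` is adjacent with at most one
vertex of `B`, and every vertex outside `B` has at most two out-neighbors in `B`. -/
def IsTotal2LimitedPacking [DecidableEq V] (A : V → V → Prop) [DecidableRel A]
    (B : Finset V) : Prop :=
  (∀ v ∈ B, (B.filter fun u => u ≠ v ∧ (A u v ∨ A v u)).card ≤ 1) ∧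
    ∀ v : V, v ∉ B → (B.filter fun u => A v u).card ≤ 2

/-- The total 2-limited packing number `L₂ᵗ(D)`. -/
noncomputable def total2LimitedPackingNumber [Fintype V] [DecidableEq V] (A : V → V → Prop)
    [DecidableRel A] : ℕ :=
  sSup {m | ∃ B : Finset V, IsTotal2LimitedPacking A B ∧ B.card = m}

/-- An end-vertex: a vertex `v` with `deg⁺(v) + deg⁻(v) = 1`. -/
def IsEndVertex [Fintype V] (A : V → V → Prop) [DecidableRel A] (v : V) : Prop :=
  outDeg A v + inDeg A v = 1

/-- A penultimate vertex: a vertex adjacent with an end-vertex. -/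
def IsPenultimate [Fintype V] (A : V → V → Prop) [DecidableRel A] (v : V) : Prop :=
  ∃ u : V, IsEndVertex A u ∧ (A u v ∨ A v u)
/-- Let `D'` be obtained from `D` by adding, for each vertex `i` of `D`,
new vertices `wᵢ = Sum.inr (Sum.inl i)` and `uᵢ = Sum.inr (Sum.inr i)` and arcs
`(wᵢ, uᵢ)`, `(uᵢ, wᵢ)` and `(uᵢ, vᵢ)`. Then `γ×₂(D') = γ×₂ᵗ(D') = 2n + γ(D)`. -/
theorem stmt18 {V : Type*} [Fintype V] [DecidableEq V] (A : V → V → Prop) [DecidableRel A]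
    (hloopless : ∀ v : V, ¬ A v v) (n : ℕ) (hn : Fintype.card V = n)
    (A' : (V ⊕ (V ⊕ V)) → (V ⊕ (V ⊕ V)) → Prop) [DecidableRel A']
    (hA' : ∀ x y : V ⊕ (V ⊕ V), A' x y ↔
      ((∃ a b : V, x = Sum.inl a ∧ y = Sum.inl b ∧ A a b) ∨
       (∃ i : V, x = Sum.inr (Sum.inl i) ∧ y = Sum.inr (Sum.inr i)) ∨
       (∃ i : V, x = Sum.inr (Sum.inr i) ∧ y = Sum.inr (Sum.inl i)) ∨
       (∃ i : V, x = Sum.inr (Sum.inr i) ∧ y = Sum.inl i))) :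
    tupleDominationNumber A' 2 = 2 * n + tupleDominationNumber A 1 ∧
    total2DominationNumber A' = 2 * n + tupleDominationNumber A 1 := by
  classical
  let w : V → V ⊕ (V ⊕ V) := fun i => Sum.inr (Sum.inl i)
  let u : V → V ⊕ (V ⊕ V) := fun i => Sum.inr (Sum.inr i)
  have harc_uw : ∀ i, A' (u i) (w i) := fun i =>
    (hA' _ _).mpr (Or.inr (Or.inr (Or.inl ⟨i, rfl, rfl⟩)))
  have harc_wu : ∀ i, A' (w i) (u i) := fun i =>
    (hA' _ _).mpr (Or.inr (Or.inl ⟨i, rfl, rfl⟩))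
  have harc_uv : ∀ i, A' (u i) (Sum.inl i) := fun i =>
    (hA' _ _).mpr (Or.inr (Or.inr (Or.inr ⟨i, rfl, rfl⟩)))
  have harc_vv : ∀ a b : V, A a b → A' (Sum.inl a) (Sum.inl b) := fun a b h =>
    (hA' _ _).mpr (Or.inl ⟨a, b, rfl, rfl, h⟩)
  have hin_w : ∀ (x : V ⊕ (V ⊕ V)) (i : V), A' x (w i) → x = u i := by
    intro x i h
    rcases (hA' _ _).mp h with ⟨a,b,hx,hy,hab⟩ | ⟨j,hx,hy⟩ | ⟨j,hx,hy⟩ | ⟨j,hx,hy⟩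
    · exact absurd hy (by simp [w])
    · exact absurd hy (by simp [w])
    · obtain rfl : j = i := by simpa [w, eq_comm] using hy
      exact hx
    · exact absurd hy (by simp [w])
  have hout_w : ∀ (x : V ⊕ (V ⊕ V)) (i : V), A' (w i) x → x = u i := by
    intro x i h
    rcases (hA' _ _).mp h with ⟨a,b,hx,hy,hab⟩ | ⟨j,hx,hy⟩ | ⟨j,hx,hy⟩ | ⟨j,hx,hy⟩
    · exact absurd hx (by simp [w])
    · obtain rfl : j = i := by simpa [w, eq_comm] using hx
      exact hy
    · exact absurd hx (by simp [w])
    · exact absurd hx (by simp [w])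
  have hin_u : ∀ (x : V ⊕ (V ⊕ V)) (i : V), A' x (u i) → x = w i := by
    intro x i h
    rcases (hA' _ _).mp h with ⟨a,b,hx,hy,hab⟩ | ⟨j,hx,hy⟩ | ⟨j,hx,hy⟩ | ⟨j,hx,hy⟩
    · exact absurd hy (by simp [u])
    · obtain rfl : j = i := by simpa [u, eq_comm] using hy
      exact hx
    · exact absurd hy (by simp [u])
    · exact absurd hy (by simp [u])
  have hin_v : ∀ (x : V ⊕ (V ⊕ V)) (i : V), A' x (Sum.inl i) → (∃ a, x = Sum.inl a ∧ A a i) ∨ x = u i := by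
    intro x i h
    rcases (hA' _ _).mp h with ⟨a,b,hx,hy,hab⟩ | ⟨j,hx,hy⟩ | ⟨j,hx,hy⟩ | ⟨j,hx,hy⟩
    · obtain rfl : b = i := by simpa [eq_comm] using hy
      exact Or.inl ⟨a, hx, hab⟩
    · exact absurd hy (by simp)
    · exact absurd hy (by simp)
    · obtain rfl : j = i := by simpa [eq_comm] using hy
      exact Or.inr hx
  have hwu_ne : ∀ i : V, w i ≠ u i := by intro i h; simp [w, u] at h
  -- minimum dominating set of D
  have hUnivDom : IsTupleDominating A 1 (Finset.univ : Finset V) := by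
    intro v
    refine Finset.card_pos.mpr ⟨v, ?_⟩
    simp
  set γ := tupleDominationNumber A 1 with hγ
  obtain ⟨T, hT, hTcard⟩ : ∃ T : Finset V, IsTupleDominating A 1 T ∧ T.card = γ := by
    have hmem := Nat.sInf_mem (s := {m | ∃ S : Finset V, IsTupleDominating A 1 S ∧ S.card = m})
      ⟨_, Finset.univ, hUnivDom, rfl⟩
    exact hmem
  -- the candidate set S'
  set S' : Finset (V ⊕ (V ⊕ V)) := T.image Sum.inl ∪ (Finset.univ : Finset (V ⊕ V)).image Sum.inr with hS'
  have hw_mem : ∀ i, w i ∈ S' := by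
    intro i; simp [hS', w]
  have hu_mem : ∀ i, u i ∈ S' := by
    intro i; simp [hS', u]
  have hv_mem : ∀ a, a ∈ T → Sum.inl a ∈ S' := by
    intro a ha; simp [hS', ha]
  have hv_mem_iff : ∀ i, Sum.inl i ∈ S' ↔ i ∈ T := by
    intro i; simp [hS']
  have hS'card : S'.card = 2 * n + γ := by
    rw [hS', Finset.card_union_of_disjoint, Finset.card_image_of_injective _ Sum.inl_injective,
      Finset.card_image_of_injective _ Sum.inr_injective, Finset.card_univ, Fintype.card_sum, hn,
      hTcard]
    · ring
    · simp [Finset.disjoint_left]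
  -- a dominator in T for every vertex of V
  have hTdom : ∀ i : V, ∃ a ∈ T, a = i ∨ A a i := by
    intro i
    have := hT i
    obtain ⟨a, ha⟩ := Finset.card_pos.mp (lt_of_lt_of_le one_pos this)
    simp only [Finset.mem_filter] at ha
    exact ⟨a, ha.1, ha.2⟩
  -- S' is 2-tuple dominating in D'
  have hS'2dom : IsTupleDominating A' 2 S' := by
    rintro (i | i | i)
    · obtain ⟨a, haT, ha⟩ := hTdom i
      have hsub : ({u i, Sum.inl a} : Finset (V ⊕ (V ⊕ V))) ⊆
          S'.filter fun x => x = Sum.inl i ∨ A' x (Sum.inl i) := by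
        intro x hx
        simp only [Finset.mem_insert, Finset.mem_singleton] at hx
        rcases hx with rfl | rfl
        · exact Finset.mem_filter.mpr ⟨hu_mem i, Or.inr (harc_uv i)⟩
        · refine Finset.mem_filter.mpr ⟨hv_mem a haT, ?_⟩
          rcases ha with rfl | ha
          · exact Or.inl rfl
          · exact Or.inr (harc_vv a i ha)
      calc (2 : ℕ) = ({u i, Sum.inl a} : Finset (V ⊕ (V ⊕ V))).card := by
            rw [Finset.card_pair]; simp [u]
        _ ≤ _ := Finset.card_le_card hsub
    · -- v = w i
      have hsub : ({w i, u i} : Finset (V ⊕ (V ⊕ V))) ⊆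
          S'.filter fun x => x = w i ∨ A' x (w i) := by
        intro x hx
        simp only [Finset.mem_insert, Finset.mem_singleton] at hx
        rcases hx with rfl | rfl
        · exact Finset.mem_filter.mpr ⟨hw_mem i, Or.inl rfl⟩
        · exact Finset.mem_filter.mpr ⟨hu_mem i, Or.inr (harc_uw i)⟩
      calc (2 : ℕ) = ({w i, u i} : Finset (V ⊕ (V ⊕ V))).card := by
            rw [Finset.card_pair (hwu_ne i)]
        _ ≤ _ := Finset.card_le_card hsub
    · -- v = u i
      have hsub : ({w i, u i} : Finset (V ⊕ (V ⊕ V))) ⊆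
          S'.filter fun x => x = u i ∨ A' x (u i) := by
        intro x hx
        simp only [Finset.mem_insert, Finset.mem_singleton] at hx
        rcases hx with rfl | rfl
        · exact Finset.mem_filter.mpr ⟨hw_mem i, Or.inr (harc_wu i)⟩
        · exact Finset.mem_filter.mpr ⟨hu_mem i, Or.inl rfl⟩
      calc (2 : ℕ) = ({w i, u i} : Finset (V ⊕ (V ⊕ V))).card := by
            rw [Finset.card_pair (hwu_ne i)]
        _ ≤ _ := Finset.card_le_card hsub
  -- S' is total 2-dominating in D'
  have hS'tot : IsTotal2Dominating A' S' := by
    constructor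
    · rintro (i | i | i) hv
      · exact ⟨u i, hu_mem i, by simp [u], Or.inl (harc_uv i)⟩
      · exact ⟨u i, hu_mem i, (hwu_ne i).symm, Or.inl (harc_uw i)⟩
      · exact ⟨w i, hw_mem i, hwu_ne i, Or.inl (harc_wu i)⟩
    · rintro (i | i | i) hv
      · obtain ⟨a, haT, ha⟩ := hTdom i
        have hiT : i ∉ T := fun h => hv (hv_mem i h)
        have hai : A a i := by
          rcases ha with rfl | ha
          · exact absurd haT hiT
          · exact ha
        have hsub : ({u i, Sum.inl a} : Finset (V ⊕ (V ⊕ V))) ⊆ S'.filter fun x => A' x (Sum.inl i) := by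
          intro x hx
          simp only [Finset.mem_insert, Finset.mem_singleton] at hx
          rcases hx with rfl | rfl
          · exact Finset.mem_filter.mpr ⟨hu_mem i, harc_uv i⟩
          · exact Finset.mem_filter.mpr ⟨hv_mem a haT, harc_vv a i hai⟩
        calc (2 : ℕ) = ({u i, Sum.inl a} : Finset (V ⊕ (V ⊕ V))).card := by
              rw [Finset.card_pair]; simp [u]
          _ ≤ _ := Finset.card_le_card hsub
      · exact absurd (hw_mem i) hv
      · exact absurd (hu_mem i) hv
  -- generic lower bound on cardinality
  have hcard_lb : ∀ S : Finset (V ⊕ (V ⊕ V)), (∀ i, w i ∈ S) → (∀ i, u i ∈ S) →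
      IsTupleDominating A 1 (Finset.univ.filter fun i => Sum.inl i ∈ S) → 2 * n + γ ≤ S.card := by
    intro S hwS huS hTS
    set TS := Finset.univ.filter fun i => Sum.inl i ∈ S with hTSdef
    have hγle : γ ≤ TS.card := Nat.sInf_le ⟨TS, hTS, rfl⟩
    have hleft : (S.filter fun x => x.isLeft).card = TS.card := by
      have : (S.filter fun x => x.isLeft) = TS.image Sum.inl := by
        ext x
        cases x with
        | inl a => simp [hTSdef]
        | inr b => simp [hTSdef]
      rw [this, Finset.card_image_of_injective _ Sum.inl_injective]
    have hright : 2 * n ≤ (S.filter fun x => ¬ x.isLeft).card := by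
      have hsub : (Finset.univ : Finset (V ⊕ V)).image Sum.inr ⊆
          S.filter fun x => ¬ x.isLeft := by
        intro x hx
        simp only [Finset.mem_image, Finset.mem_univ, true_and] at hx
        obtain ⟨y, rfl⟩ := hx
        refine Finset.mem_filter.mpr ⟨?_, by simp⟩
        cases y with
        | inl i => exact hwS i
        | inr i => exact huS i
      calc 2 * n = ((Finset.univ : Finset (V ⊕ V)).image Sum.inr).card := by
            rw [Finset.card_image_of_injective _ Sum.inr_injective, Finset.card_univ,
              Fintype.card_sum, hn]; ring
        _ ≤ _ := Finset.card_le_card hsub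
    calc 2 * n + γ ≤ (S.filter fun x => ¬ x.isLeft).card + (S.filter fun x => x.isLeft).card := by
          rw [hleft]; exact Nat.add_le_add hright hγle
      _ = S.card := by
          rw [add_comm]; exact Finset.card_filter_add_card_filter_not _
  -- lower bound for 2-tuple domination
  have hlb2 : ∀ S : Finset (V ⊕ (V ⊕ V)), IsTupleDominating A' 2 S → 2 * n + γ ≤ S.card := by
    intro S hS
    have hwu : ∀ i, w i ∈ S ∧ u i ∈ S := by
      intro i
      have h2 := hS (w i)
      have hsub : (S.filter fun x => x = w i ∨ A' x (w i)) ⊆ {w i, u i} := by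
        intro x hx
        rcases Finset.mem_filter.mp hx with ⟨_, rfl | hx2⟩
        · simp
        · simp [hin_w x i hx2]
      have heq : (S.filter fun x => x = w i ∨ A' x (w i)) = {w i, u i} := by
        apply Finset.eq_of_subset_of_card_le hsub
        rw [Finset.card_pair (hwu_ne i)]; exact h2
      constructor
      · have : w i ∈ S.filter fun x => x = w i ∨ A' x (w i) := by rw [heq]; simp
        exact (Finset.mem_filter.mp this).1
      · have : u i ∈ S.filter fun x => x = w i ∨ A' x (w i) := by rw [heq]; simp
        exact (Finset.mem_filter.mp this).1
    refine hcard_lb S (fun i => (hwu i).1) (fun i => (hwu i).2) ?_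
    intro i
    have h2 := hS (Sum.inl i)
    obtain ⟨x, hx, hxne⟩ := Finset.exists_mem_ne (lt_of_lt_of_le one_lt_two h2) (u i)
    rcases Finset.mem_filter.mp hx with ⟨hxS, rfl | hx2⟩
    · refine Finset.card_pos.mpr ⟨i, ?_⟩
      simp [hxS]
    · rcases hin_v x i hx2 with ⟨a, rfl, ha⟩ | rfl
      · refine Finset.card_pos.mpr ⟨a, ?_⟩
        simp [hxS, ha]
      · exact absurd rfl hxne
  -- lower bound for total 2-domination
  have hlbt : ∀ S : Finset (V ⊕ (V ⊕ V)), IsTotal2Dominating A' S → 2 * n + γ ≤ S.card := by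
    intro S hS
    have hwS : ∀ i, w i ∈ S := by
      intro i
      by_contra hw
      have h2 := hS.2 (w i) hw
      have hsub : (S.filter fun x => A' x (w i)) ⊆ {u i} := by
        intro x hx
        rcases Finset.mem_filter.mp hx with ⟨_, hx2⟩
        simp [hin_w x i hx2]
      have := Finset.card_le_card hsub
      simp at this
      omega
    have huS : ∀ i, u i ∈ S := by
      intro i
      obtain ⟨x, hxS, hxne, hadj⟩ := hS.1 (w i) (hwS i)
      have : x = u i := by
        rcases hadj with h | h
        · exact hin_w x i h
        · exact hout_w x i h
      rwa [this] at hxS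
    refine hcard_lb S hwS huS ?_
    intro i
    by_cases hiS : Sum.inl i ∈ S
    · refine Finset.card_pos.mpr ⟨i, ?_⟩
      simp [hiS]
    · have h2 := hS.2 (Sum.inl i) hiS
      obtain ⟨x, hx, hxne⟩ := Finset.exists_mem_ne (lt_of_lt_of_le one_lt_two h2) (u i)
      rcases Finset.mem_filter.mp hx with ⟨hxS, hx2⟩
      rcases hin_v x i hx2 with ⟨a, rfl, ha⟩ | rfl
      · refine Finset.card_pos.mpr ⟨a, ?_⟩
        simp [hxS, ha]
      · exact absurd rfl hxne
  constructor
  · refine le_antisymm (Nat.sInf_le ⟨S', hS'2dom, hS'card⟩) ?_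
    refine le_csInf ⟨_, S', hS'2dom, hS'card⟩ ?_
    rintro m ⟨S, hS, rfl⟩
    exact hlb2 S hS
  · refine le_antisymm (Nat.sInf_le ⟨S', hS'tot, hS'card⟩) ?_
    refine le_csInf ⟨_, S', hS'tot, hS'card⟩ ?_
    rintro m ⟨S, hS, rfl⟩
    exact hlbt S hS
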